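/- For every real number ρ ≥ 2 and all integers l ≥ 1 and n ≥ 1, one has 0 ≤ ∑_{m ∣ n} μ(n/m) · ρ^{gcd(l,m)} ≤ ρ^l. -/

import Mathlib

open Finset ArithmeticFunction
open scoped ArithmeticFunction.Moebius

noncomputable def Gfun (ρ : ℝ) (l n : ℕ) : ℝ :=
  ∑ m ∈ n.divisors, ((ArithmeticFunction.moebius (n / m) : ℤ) : ℝ) * ρ ^ Nat.gcd l m

lemma Gfun_inv (ρ : ℝ) (l : ℕ) : ∀ n, 0 < n →
    ∑ d ∈ n.divisors, Gfun ρ l d = ρ ^ Nat.gcd l n := by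
  rw [ArithmeticFunction.sum_eq_iff_sum_smul_moebius_eq
    (f := Gfun ρ l) (g := fun n => ρ ^ Nat.gcd l n)]
  intro n hn
  rw [Nat.sum_divisorsAntidiagonal' (f := fun a b => (μ a : ℤ) • (ρ ^ Nat.gcd l b))]
  unfold Gfun
  refine Finset.sum_congr rfl fun m hm => ?_
  rw [zsmul_eq_mul]

-- split off the top divisor
lemma Gfun_eq (ρ : ℝ) (l n : ℕ) (hn : 0 < n) :
    Gfun ρ l n = ρ ^ Nat.gcd l n - ∑ d ∈ n.properDivisors, Gfun ρ l d := by
  have h := Gfun_inv ρ l n hn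
  rw [← Nat.insert_self_properDivisors hn.ne', Finset.sum_insert Nat.self_notMem_properDivisors] at h
  linarith

lemma Gfun_eq_zero (ρ : ℝ) (l : ℕ) (hl : 0 < l) :
    ∀ n, 0 < n → ¬ n ∣ l → Gfun ρ l n = 0 := by
  intro n
  induction n using Nat.strong_induction_on with
  | _ n ih =>
    intro hn hndvd
    rw [Gfun_eq ρ l n hn]
    have hg : 0 < Nat.gcd l n := Nat.gcd_pos_of_pos_left _ hl
    have hsub : ∑ d ∈ n.properDivisors, Gfun ρ l d
        = ∑ d ∈ (Nat.gcd l n).divisors, Gfun ρ l d := by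
      rw [← Finset.sum_filter_add_sum_filter_not n.properDivisors (· ∣ l)]
      have h2 : ∑ d ∈ n.properDivisors.filter (fun d => ¬ d ∣ l), Gfun ρ l d = 0 := by
        apply Finset.sum_eq_zero
        intro d hd
        simp only [Finset.mem_filter, Nat.mem_properDivisors] at hd
        exact ih d hd.1.2 (Nat.pos_of_dvd_of_pos hd.1.1 hn) hd.2
      rw [h2, add_zero]
      apply Finset.sum_congr _ (fun _ _ => rfl)
      ext d
      simp only [Finset.mem_filter, Nat.mem_properDivisors, Nat.mem_divisors,
        Nat.dvd_gcd_iff]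
      constructor
      · rintro ⟨⟨h1, h2⟩, h3⟩
        exact ⟨⟨h3, h1⟩, hg.ne'⟩
      · rintro ⟨⟨h3, h1⟩, -⟩
        refine ⟨⟨h1, lt_of_le_of_ne (Nat.le_of_dvd hn h1) ?_⟩, h3⟩
        rintro rfl; exact hndvd h3
    have hgg : Nat.gcd l (Nat.gcd l n) = Nat.gcd l n :=
      Nat.gcd_eq_right (Nat.gcd_dvd_left l n)
    rw [hsub, Gfun_inv ρ l _ hg, hgg]
    ring

lemma geom_bound (ρ : ℝ) (hρ : 2 ≤ ρ) : ∀ K, ∑ k ∈ Finset.range K, ρ ^ k ≤ ρ ^ K - 1 := by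
  intro K
  induction K with
  | zero => simp
  | succ K ih =>
    rw [Finset.sum_range_succ, pow_succ]
    have h1 : (2:ℝ) * ρ ^ K ≤ ρ * ρ ^ K := by
      apply mul_le_mul_of_nonneg_right hρ (pow_nonneg (by linarith) K)
    linarith

lemma Gfun_self_nonneg (ρ : ℝ) (hρ : 2 ≤ ρ) (n : ℕ) (hn : 0 < n) : 0 ≤ Gfun ρ n n := by
  have hρ0 : (0:ℝ) ≤ ρ := by linarith
  have hρ1 : (1:ℝ) ≤ ρ := by linarith
  have hG : Gfun ρ n n = ∑ m ∈ n.divisors, ((μ (n / m) : ℤ) : ℝ) * ρ ^ m := by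
    unfold Gfun
    refine Finset.sum_congr rfl fun m hm => ?_
    rw [Nat.gcd_eq_right (Nat.dvd_of_mem_divisors hm)]
  rw [hG, ← Nat.insert_self_properDivisors hn.ne',
    Finset.sum_insert Nat.self_notMem_properDivisors, Nat.div_self hn]
  simp only [ArithmeticFunction.moebius_apply_one, Int.cast_one, one_mul]
  have key : ∑ m ∈ n.properDivisors, ((μ (n / m) : ℤ) : ℝ) * ρ ^ m
      ≥ -(ρ ^ n - 1) := by
    have h1 : ∀ m ∈ n.properDivisors, -(ρ ^ m) ≤ ((μ (n / m) : ℤ) : ℝ) * ρ ^ m := by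
      intro m hm
      have hb : -1 ≤ ((μ (n / m) : ℤ) : ℝ) := by
        have := @ArithmeticFunction.abs_moebius_le_one (n / m)
        have : |((μ (n / m) : ℤ) : ℝ)| ≤ 1 := by exact_mod_cast (by exact_mod_cast this)
        linarith [abs_le.mp this |>.1]
      calc -(ρ ^ m) = (-1) * ρ ^ m := by ring
        _ ≤ ((μ (n / m) : ℤ) : ℝ) * ρ ^ m :=
          mul_le_mul_of_nonneg_right hb (pow_nonneg hρ0 m)
    have h2 : ∑ m ∈ n.properDivisors, -(ρ ^ m)
        ≤ ∑ m ∈ n.properDivisors, ((μ (n / m) : ℤ) : ℝ) * ρ ^ m :=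
      Finset.sum_le_sum h1
    have h3 : ∑ m ∈ n.properDivisors, ρ ^ m ≤ ∑ k ∈ Finset.range (n / 2 + 1), ρ ^ k := by
      apply Finset.sum_le_sum_of_subset_of_nonneg
      · intro m hm
        rw [Nat.mem_properDivisors] at hm
        rw [Finset.mem_range, Nat.lt_succ_iff]
        obtain ⟨c, rfl⟩ := hm.1
        have hc : 2 ≤ c := by
          rcases Nat.lt_or_ge c 2 with h | h
          · interval_cases c <;> omega
          · exact h
        have : m * 2 ≤ m * c := Nat.mul_le_mul le_rfl hc
        omega
      · intro k _ _
        exact pow_nonneg hρ0 k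
    have h4 : ∑ k ∈ Finset.range (n / 2 + 1), ρ ^ k ≤ ρ ^ (n / 2 + 1) - 1 :=
      geom_bound ρ hρ _
    have h5 : ρ ^ (n / 2 + 1) ≤ ρ ^ n := pow_le_pow_right₀ hρ1 (by omega)
    rw [Finset.sum_neg_distrib] at h2
    linarith
  have hpow : 1 ≤ ρ ^ n := one_le_pow₀ hρ1
  linarith

lemma Gfun_nonneg (ρ : ℝ) (hρ : 2 ≤ ρ) (l n : ℕ) (hl : 0 < l) (hn : 0 < n) :
    0 ≤ Gfun ρ l n := by
  by_cases h : n ∣ l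
  · have : Gfun ρ l n = Gfun ρ n n := by
      unfold Gfun
      refine Finset.sum_congr rfl fun m hm => ?_
      rw [Nat.gcd_eq_right (Nat.dvd_of_mem_divisors hm),
        Nat.gcd_eq_right ((Nat.dvd_of_mem_divisors hm).trans h)]
    rw [this]
    exact Gfun_self_nonneg ρ hρ n hn
  · rw [Gfun_eq_zero ρ l hl n hn h]

/-- For every real `ρ ≥ 2` and integers `l, n ≥ 1`,
`0 ≤ ∑_{m ∣ n} μ(n/m) ρ^{gcd(l,m)} ≤ ρ^l`. -/
theorem stmt7 (ρ : ℝ) (hρ : 2 ≤ ρ) (l n : ℕ) (hl : 1 ≤ l) (hn : 1 ≤ n) :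
    0 ≤ ∑ m ∈ n.divisors, ((ArithmeticFunction.moebius (n / m) : ℤ) : ℝ) * ρ ^ Nat.gcd l m ∧
    ∑ m ∈ n.divisors, ((ArithmeticFunction.moebius (n / m) : ℤ) : ℝ) * ρ ^ Nat.gcd l m ≤ ρ ^ l := by
  have hρ1 : (1:ℝ) ≤ ρ := by linarith
  have hsum : (∑ m ∈ n.divisors, ((ArithmeticFunction.moebius (n / m) : ℤ) : ℝ)
      * ρ ^ Nat.gcd l m) = Gfun ρ l n := rfl
  rw [hsum]
  constructor
  · exact Gfun_nonneg ρ hρ l n hl hn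
  · rw [Gfun_eq ρ l n hn]
    have h1 : 0 ≤ ∑ d ∈ n.properDivisors, Gfun ρ l d := by
      apply Finset.sum_nonneg
      intro d hd
      exact Gfun_nonneg ρ hρ l d hl (Nat.pos_of_mem_properDivisors hd)
    have h2 : ρ ^ Nat.gcd l n ≤ ρ ^ l :=
      pow_le_pow_right₀ hρ1 (Nat.gcd_le_left n hl)
    linarith
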